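/- Let G be a finite bipartite multigraph (no loops). Then the sequence of successive differences ν_{k+1}(G) − ν_k(G) is non-increasing in k; that is, for every k ≥ 1, ν_k(G) − ν_{k−1}(G) ≥ ν_{k+1}(G) − ν_k(G). -/

import Mathlib

variable {V E : Type*}

/-- Degree of vertex `v` in the edge set `A` of a multigraph given by `ends`. -/
def degIn [DecidableEq V] (ends : E → Sym2 V) (A : Finset E) (v : V) : ℕ :=
  (A.filter (fun e => v ∈ ends e)).card

/-- The edge set `A` admits a proper edge coloring with at most `k` colors:
adjacent (distinct, sharing an endpoint) edges get different colors. -/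
def EdgeColorable (ends : E → Sym2 V) (A : Finset E) (k : ℕ) : Prop :=
  ∃ c : E → ℕ, (∀ e ∈ A, c e < k) ∧
    ∀ e₁ ∈ A, ∀ e₂ ∈ A, e₁ ≠ e₂ → (∃ v, v ∈ ends e₁ ∧ v ∈ ends e₂) → c e₁ ≠ c e₂

/-- `ν_k`: the maximum number of edges of a `k`-edge-colorable subgraph whose
edge set lies in `ground`. -/
noncomputable def nu (ends : E → Sym2 V) (ground : Finset E) (k : ℕ) : ℕ :=
  sSup {n | ∃ F : Finset E, F ⊆ ground ∧ EdgeColorable ends F k ∧ F.card = n}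

/-- The multigraph given by `ends` is bipartite. -/
def IsBipartite (ends : E → Sym2 V) : Prop :=
  ∃ f : V → Bool, ∀ e : E, ∀ u v : V, ends e = s(u, v) → f u ≠ f v

/-- There is an `A`-augmenting path: a simple path of odd length whose
odd-numbered (1st, 3rd, ...) edges lie outside `A`, whose even-numbered
(2nd, 4th, ...) edges belong to `A`, and whose endpoints have degree
at most `k - 1` in `A`. -/
def IsAugPath [DecidableEq V] (ends : E → Sym2 V) (A : Finset E) (k : ℕ) : Prop :=
  ∃ (m : ℕ) (vs : Fin (m + 1) → V) (es : Fin m → E),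
    Odd m ∧ Function.Injective vs ∧
    (∀ i : Fin m, ends (es i) = s(vs i.castSucc, vs i.succ)) ∧
    (∀ i : Fin m, (i : ℕ) % 2 = 0 → es i ∉ A) ∧
    (∀ i : Fin m, (i : ℕ) % 2 = 1 → es i ∈ A) ∧
    degIn ends A (vs 0) ≤ k - 1 ∧ degIn ends A (vs (Fin.last m)) ≤ k - 1

section Aux
variable [DecidableEq V] [DecidableEq E]

lemma degIn_union_add_degIn_inter (ends : E → Sym2 V) (A B : Finset E) (v : V) :
    degIn ends (A ∪ B) v + degIn ends (A ∩ B) v = degIn ends A v + degIn ends B v := by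
  classical
  unfold degIn
  rw [Finset.filter_union, Finset.filter_inter_distrib]
  exact Finset.card_union_add_card_inter _ _


lemma degIn_union_of_disjoint (ends : E → Sym2 V) {A B : Finset E} (h : Disjoint A B) (v : V) :
    degIn ends (A ∪ B) v = degIn ends A v + degIn ends B v := by
  classical
  unfold degIn
  rw [Finset.filter_union, Finset.card_union_of_disjoint]
  exact Finset.disjoint_filter_filter h

lemma degIn_sdiff_add (ends : E → Sym2 V) {I A : Finset E} (h : I ⊆ A) (v : V) :
    degIn ends (A \ I) v + degIn ends I v = degIn ends A v := by
  classical
  have h2 : Disjoint (A \ I) I := Finset.sdiff_disjoint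
  rw [← degIn_union_of_disjoint ends h2 v, Finset.sdiff_union_of_subset h]

lemma degIn_mono (ends : E → Sym2 V) {A B : Finset E} (h : A ⊆ B) (v : V) :
    degIn ends A v ≤ degIn ends B v :=
  Finset.card_le_card (Finset.filter_subset_filter _ h)

lemma degIn_le_of_colorable {ends : E → Sym2 V} {A : Finset E} {k : ℕ}
    (h : EdgeColorable ends A k) (v : V) : degIn ends A v ≤ k := by
  classical
  obtain ⟨c, hlt, hprop⟩ := h
  have : (A.filter (fun e => v ∈ ends e)).card ≤ (Finset.range k).card := by
    apply Finset.card_le_card_of_injOn c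
    · intro e he
      simp only [Finset.mem_coe, Finset.mem_filter] at he
      simpa using hlt e he.1
    · intro e₁ h₁ e₂ h₂ hcc
      simp only [Finset.mem_filter, Finset.coe_filter, Set.mem_setOf_eq] at h₁ h₂
      by_contra hne
      exact hprop e₁ h₁.1 e₂ h₂.1 hne ⟨v, h₁.2, h₂.2⟩ hcc
  simpa [degIn] using this

end Aux

section Konig
variable [DecidableEq V]

private lemma bool3 : ∀ a b c : Bool, a ≠ b → a ≠ c → b = c := by decide

private lemma sym2_exists_eq (z : Sym2 V) : ∃ x y, z = s(x, y) :=
  z.inductionOn fun x y => ⟨x, y, rfl⟩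

/-- Kempe-chain reachability: edges reachable from `v` along an alternating
`α`/`β` chain, together with the vertex they were "entered" at. -/
inductive KReach (ends : E → Sym2 V) (A : Finset E) (c : E → ℕ) (α β : ℕ) (v : V) : E → V → Prop
  | base (e : E) (w : V) (he : e ∈ A) (hc : c e = α) (hw : ends e = s(v, w)) :
      KReach ends A c α β v e w
  | step (e : E) (w : V) (e' : E) (w' : V) (h : KReach ends A c α β v e w) (he' : e' ∈ A)
      (hne : e' ≠ e) (hc : c e' = (if c e = α then β else α)) (hw' : ends e' = s(w, w')) :
      KReach ends A c α β v e' w'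

variable {ends : E → Sym2 V} {A : Finset E} {c : E → ℕ} {α β : ℕ} {u v : V} {f : V → Bool}

lemma KReach.invar (hf : ∀ e : E, ∀ x y : V, ends e = s(x, y) → f x ≠ f y) (hαβ : α ≠ β)
    {e : E} {w : V} (h : KReach ends A c α β v e w) :
    e ∈ A ∧ w ∈ ends e ∧ ((c e = α ∧ f w ≠ f v) ∨ (c e = β ∧ f w = f v)) := by
  induction h with
  | base e w he hc hw =>
    refine ⟨he, by rw [hw]; exact Sym2.mem_mk_right v w, Or.inl ⟨hc, (hf _ _ _ hw).symm⟩⟩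
  | step e w e' w' h he' hne hc hw' ih =>
    obtain ⟨heA, hwe, hcol⟩ := ih
    have hww' : f w ≠ f w' := hf _ _ _ hw'
    refine ⟨he', by rw [hw']; exact Sym2.mem_mk_right _ _, ?_⟩
    rcases hcol with ⟨hce, hfw⟩ | ⟨hce, hfw⟩
    · rw [hce, if_pos rfl] at hc
      exact Or.inr ⟨hc, (bool3 (f w) (f w') (f v) hww' hfw).symm ▸ rfl⟩
    · have hcne : c e ≠ α := fun hh => hαβ (hh.symm.trans hce)
      rw [if_neg hcne] at hc
      refine Or.inl ⟨hc, fun hh => hww' ?_⟩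
      rw [hh, hfw]

lemma KReach.not_mem_u (hf : ∀ e : E, ∀ x y : V, ends e = s(x, y) → f x ≠ f y) (hαβ : α ≠ β)
    (huv : f u ≠ f v) (hαu : ∀ e ∈ A, u ∈ ends e → c e ≠ α)
    {e : E} {w : V} (h : KReach ends A c α β v e w) : u ∉ ends e := by
  induction h with
  | base e w he hc hw =>
    intro hu
    rw [hw, Sym2.mem_iff] at hu
    rcases hu with rfl | rfl
    · exact huv rfl
    · exact hαu e he (by rw [hw]; exact Sym2.mem_mk_right _ _) hc
  | step e w e' w' h he' hne hc hw' ih =>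
    intro hu
    obtain ⟨heA, hwe, hcol⟩ := KReach.invar hf hαβ h
    rw [hw', Sym2.mem_iff] at hu
    rcases hu with rfl | rfl
    · exact ih hwe
    · have hue' : u ∈ ends e' := by rw [hw']; exact Sym2.mem_mk_right _ _
      rcases hcol with ⟨hce, hfw⟩ | ⟨hce, hfw⟩
      · have h1 : f w ≠ f u := hf _ _ _ hw'
        exact huv (bool3 (f w) (f u) (f v) h1 hfw)
      · have hcne : c e ≠ α := fun hh => hαβ (hh.symm.trans hce)
        rw [if_neg hcne] at hc
        exact hαu e' he' hue' hc

lemma KReach.closure (hf : ∀ e : E, ∀ x y : V, ends e = s(x, y) → f x ≠ f y) (hαβ : α ≠ β)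
    (hprop : ∀ e₁ ∈ A, ∀ e₂ ∈ A, e₁ ≠ e₂ → (∃ y, y ∈ ends e₁ ∧ y ∈ ends e₂) → c e₁ ≠ c e₂)
    (hβv : ∀ e ∈ A, v ∈ ends e → c e ≠ β)
    {e : E} {w : V} (h : KReach ends A c α β v e w) :
    ∀ g ∈ A, (c g = α ∨ c g = β) → g ≠ e → (∃ y, y ∈ ends e ∧ y ∈ ends g) →
      ∃ w', KReach ends A c α β v g w' := by
  induction h with
  | base e w he hc hw =>
    rintro g hg hcg hne ⟨y, hye, hyg⟩
    rw [hw, Sym2.mem_iff] at hye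
    rcases hye with rfl | rfl
    · rcases hcg with hga | hgb
      · exact absurd (hga.trans hc.symm)
          (hprop g hg e he hne ⟨y, hyg, by rw [hw]; exact Sym2.mem_mk_left _ _⟩)
      · exact absurd hgb (hβv g hg hyg)
    · rcases hcg with hga | hgb
      · exact absurd (hga.trans hc.symm)
          (hprop g hg e he hne ⟨y, hyg, by rw [hw]; exact Sym2.mem_mk_right _ _⟩)
      · obtain ⟨z, hz⟩ : ∃ z, ends g = s(y, z) := Sym2.mem_iff_exists.1 hyg
        exact ⟨z, KReach.step e y g z (KReach.base e y he hc hw) hg hne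
          (by rw [hc, if_pos rfl]; exact hgb) hz⟩
  | step e w e' w' h he' hne hc hw' ih =>
    rintro g hg hcg hgne ⟨y, hye', hyg⟩
    obtain ⟨heA, hwe, hcol⟩ := KReach.invar hf hαβ h
    have hfull : KReach ends A c α β v e' w' := KReach.step e w e' w' h he' hne hc hw'
    rw [hw', Sym2.mem_iff] at hye'
    rcases hye' with rfl | rfl
    · -- y = w : g shares the back vertex of e'
      by_cases hgc : c g = c e'
      · exact absurd hgc
          (hprop g hg e' he' hgne ⟨y, hyg, by rw [hw']; exact Sym2.mem_mk_left _ _⟩)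
      · by_cases hge : g = e
        · exact ⟨y, hge ▸ h⟩
        · have hcge : c g = c e := by
            rcases hcol with ⟨hce, _⟩ | ⟨hce, _⟩
            · rw [hce, if_pos rfl] at hc
              rcases hcg with h1 | h1
              · rw [h1, hce]
              · exact absurd (h1.trans hc.symm) hgc
            · have hcne : c e ≠ α := fun hh => hαβ (hh.symm.trans hce)
              rw [if_neg hcne] at hc
              rcases hcg with h1 | h1
              · exact absurd (h1.trans hc.symm) hgc
              · rw [h1, hce]
          exact absurd hcge (hprop g hg e heA hge ⟨y, hyg, hwe⟩)
    · -- y = w' : extend the chain through w'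
      by_cases hgc : c g = c e'
      · exact absurd hgc
          (hprop g hg e' he' hgne ⟨y, hyg, by rw [hw']; exact Sym2.mem_mk_right _ _⟩)
      · have hce' : c e' = α ∨ c e' = β := by
          rcases (KReach.invar hf hαβ hfull).2.2 with ⟨h1, _⟩ | ⟨h1, _⟩
          · exact Or.inl h1
          · exact Or.inr h1
        have hcg' : c g = (if c e' = α then β else α) := by
          rcases hce' with h1 | h1
          · rw [h1, if_pos rfl]
            rcases hcg with h2 | h2
            · exact absurd (h2.trans h1.symm) hgc
            · exact h2
          · have hcne : c e' ≠ α := fun hh => hαβ (hh.symm.trans h1)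
            rw [if_neg hcne]
            rcases hcg with h2 | h2
            · exact h2
            · exact absurd (h2.trans h1.symm) hgc
        obtain ⟨z, hz⟩ : ∃ z, ends g = s(y, z) := Sym2.mem_iff_exists.1 hyg
        exact ⟨z, KReach.step e' y g z hfull hg hgne hcg' hz⟩

end Konig

section KonigMain
variable [DecidableEq V]

lemma konig (ends : E → Sym2 V) (hloop : ∀ e : E, ¬ (ends e).IsDiag)
    (f : V → Bool) (hf : ∀ e : E, ∀ x y : V, ends e = s(x, y) → f x ≠ f y) (k : ℕ) :
    ∀ A : Finset E, (∀ w, degIn ends A w ≤ k) → EdgeColorable ends A k := by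
  classical
  intro A
  induction A using Finset.strongInduction with
  | _ A ih =>
    intro hdeg
    rcases Finset.eq_empty_or_nonempty A with rfl | ⟨e₀, he₀⟩
    · exact ⟨fun _ => 0, fun e he => absurd he (by simp), fun e₁ h₁ => absurd h₁ (by simp)⟩
    obtain ⟨u, v, huv'⟩ := sym2_exists_eq (ends e₀)
    have hfuv : f u ≠ f v := hf e₀ u v huv'
    set A' := A.erase e₀ with hA'
    have hsub : A' ⊂ A := Finset.erase_ssubset he₀
    have hdeg' : ∀ w, degIn ends A' w ≤ k := fun w =>
      le_trans (degIn_mono ends (Finset.erase_subset _ _) w) (hdeg w)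
    obtain ⟨c, hck, hcp⟩ := ih A' hsub hdeg'
    -- existence of a missing color at each endpoint of `e₀`
    have hmiss : ∀ w, w ∈ ends e₀ → ∃ γ < k, ∀ e ∈ A', w ∈ ends e → c e ≠ γ := by
      intro w hw
      set used := (A'.filter (fun e => w ∈ ends e)).image c with hused
      have h1 : used.card ≤ degIn ends A' w := Finset.card_image_le
      have h2 : degIn ends A' w < degIn ends A w := by
        unfold degIn
        rw [hA', Finset.filter_erase]
        exact Finset.card_erase_lt_of_mem (Finset.mem_filter.2 ⟨he₀, hw⟩)
      have h3 : used.card < k := lt_of_lt_of_le (lt_of_le_of_lt h1 h2) (hdeg w)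
      have h4 : ¬ (Finset.range k ⊆ used) := by
        intro hsubs
        have := Finset.card_le_card hsubs
        rw [Finset.card_range] at this
        omega
      obtain ⟨γ, hγk, hγ⟩ := Finset.not_subset.1 h4
      refine ⟨γ, by simpa using hγk, ?_⟩
      intro e he hwe hce
      exact hγ (Finset.mem_image.2 ⟨e, Finset.mem_filter.2 ⟨he, hwe⟩, hce⟩)
    -- finishing: a color free at both `u` and `v` lets us color `e₀`
    have finish : ∀ c₁ : E → ℕ, (∀ e ∈ A', c₁ e < k) →
        (∀ e₁ ∈ A', ∀ e₂ ∈ A', e₁ ≠ e₂ → (∃ y, y ∈ ends e₁ ∧ y ∈ ends e₂) → c₁ e₁ ≠ c₁ e₂) →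
        ∀ γ, γ < k → (∀ e ∈ A', u ∈ ends e → c₁ e ≠ γ) → (∀ e ∈ A', v ∈ ends e → c₁ e ≠ γ) →
        EdgeColorable ends A k := by
      intro c₁ hk1 hp1 γ hγk hγu hγv
      refine ⟨Function.update c₁ e₀ γ, ?_, ?_⟩
      · intro e he
        rcases eq_or_ne e e₀ with rfl | hne
        · rw [Function.update_self]; exact hγk
        · rw [Function.update_of_ne hne]; exact hk1 e (Finset.mem_erase.2 ⟨hne, he⟩)
      · intro e₁ h₁ e₂ h₂ hne hsh
        rcases eq_or_ne e₁ e₀ with rfl | hn1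
        · rw [Function.update_self, Function.update_of_ne (Ne.symm hne)]
          obtain ⟨y, hy1, hy2⟩ := hsh
          rw [huv', Sym2.mem_iff] at hy1
          have h₂' : e₂ ∈ A' := Finset.mem_erase.2 ⟨Ne.symm hne, h₂⟩
          rcases hy1 with rfl | rfl
          · exact fun hh => hγu e₂ h₂' hy2 hh.symm
          · exact fun hh => hγv e₂ h₂' hy2 hh.symm
        · rcases eq_or_ne e₂ e₀ with rfl | hn2
          · rw [Function.update_self, Function.update_of_ne hn1]
            obtain ⟨y, hy1, hy2⟩ := hsh
            rw [huv', Sym2.mem_iff] at hy2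
            have h₁' : e₁ ∈ A' := Finset.mem_erase.2 ⟨hn1, h₁⟩
            rcases hy2 with rfl | rfl
            · exact hγu e₁ h₁' hy1
            · exact hγv e₁ h₁' hy1
          · rw [Function.update_of_ne hn1, Function.update_of_ne hn2]
            exact hp1 e₁ (Finset.mem_erase.2 ⟨hn1, h₁⟩) e₂ (Finset.mem_erase.2 ⟨hn2, h₂⟩) hne hsh
    obtain ⟨α, hαk, hαu⟩ := hmiss u (by rw [huv']; exact Sym2.mem_mk_left _ _)
    by_cases hαv : ∀ e ∈ A', v ∈ ends e → c e ≠ α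
    · exact finish c hck hcp α hαk hαu hαv
    · obtain ⟨β, hβk, hβv⟩ := hmiss v (by rw [huv']; exact Sym2.mem_mk_right _ _)
      have hαβ : α ≠ β := by
        rintro rfl
        push_neg at hαv
        obtain ⟨e, he, hwe, hce⟩ := hαv
        exact hβv e he hwe hce
      set Rch := fun e => ∃ w, KReach ends A' c α β v e w with hRch
      set c₂ := fun e => if Rch e then (if c e = α then β else α) else c e with hc₂
      have hin : ∀ {e : E} {w : V}, KReach ends A' c α β v e w →
          e ∈ A' ∧ w ∈ ends e ∧ ((c e = α ∧ f w ≠ f v) ∨ (c e = β ∧ f w = f v)) :=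
        fun h => KReach.invar hf hαβ h
      have hc₂k : ∀ e ∈ A', c₂ e < k := by
        intro e he
        simp only [hc₂]
        split_ifs with h1 h2
        · exact hβk
        · exact hαk
        · exact hck e he
      have hc₂p : ∀ e₁ ∈ A', ∀ e₂ ∈ A', e₁ ≠ e₂ →
          (∃ y, y ∈ ends e₁ ∧ y ∈ ends e₂) → c₂ e₁ ≠ c₂ e₂ := by
        intro e₁ h₁ e₂ h₂ hne hsh
        by_cases r₁ : Rch e₁ <;> by_cases r₂ : Rch e₂
        · have hcc := hcp e₁ h₁ e₂ h₂ hne hsh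
          obtain ⟨w₁, hw₁⟩ := id r₁
          obtain ⟨w₂, hw₂⟩ := id r₂
          simp only [hc₂, if_pos r₁, if_pos r₂]
          rcases (hin hw₁).2.2 with ⟨ha, _⟩ | ⟨ha, _⟩ <;>
            rcases (hin hw₂).2.2 with ⟨hb, _⟩ | ⟨hb, _⟩
          · exact absurd (ha.trans hb.symm) hcc
          · rw [ha, hb, if_pos rfl, if_neg (Ne.symm hαβ)]
            exact Ne.symm hαβ
          · rw [ha, hb, if_pos rfl, if_neg (Ne.symm hαβ)]
            exact hαβ
          · exact absurd (ha.trans hb.symm) hcc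
        · obtain ⟨w₁, hw₁⟩ := id r₁
          have hg : ¬(c e₂ = α ∨ c e₂ = β) := by
            intro hcg
            exact r₂ (KReach.closure hf hαβ hcp hβv hw₁ e₂ h₂ hcg (Ne.symm hne) hsh)
          push_neg at hg
          simp only [hc₂, if_pos r₁, if_neg r₂]
          split_ifs with h1
          · exact Ne.symm hg.2
          · exact Ne.symm hg.1
        · obtain ⟨w₂, hw₂⟩ := id r₂
          have hg : ¬(c e₁ = α ∨ c e₁ = β) := by
            intro hcg
            obtain ⟨y, hy1, hy2⟩ := hsh
            exact r₁ (KReach.closure hf hαβ hcp hβv hw₂ e₁ h₁ hcg hne ⟨y, hy2, hy1⟩)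
          push_neg at hg
          simp only [hc₂, if_neg r₁, if_pos r₂]
          split_ifs with h1
          · exact hg.2
          · exact hg.1
        · simp only [hc₂, if_neg r₁, if_neg r₂]
          exact hcp e₁ h₁ e₂ h₂ hne hsh
      have hαv₂ : ∀ e ∈ A', v ∈ ends e → c₂ e ≠ α := by
        intro e he hv hce
        by_cases r : Rch e
        · obtain ⟨w, hw⟩ := id r
          rcases (hin hw).2.2 with ⟨ha, _⟩ | ⟨ha, _⟩
          · rw [hc₂] at hce
            simp only [if_pos r, ha, if_pos rfl] at hce
            exact (Ne.symm hαβ) hce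
          · exact hβv e he hv ha
        · have hce' : c e = α := by
            rw [hc₂] at hce
            simpa [if_neg r] using hce
          obtain ⟨z, hz⟩ := Sym2.mem_iff_exists.1 hv
          exact r ⟨z, KReach.base e z he hce' hz⟩
      have hαu₂ : ∀ e ∈ A', u ∈ ends e → c₂ e ≠ α := by
        intro e he hu hce
        by_cases r : Rch e
        · obtain ⟨w, hw⟩ := id r
          exact (KReach.not_mem_u hf hαβ hfuv hαu hw) hu
        · refine hαu e he hu ?_
          rw [hc₂] at hce
          simpa [if_neg r] using hce
      exact finish c₂ hc₂k hc₂p α hαk hαu₂ hαv₂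

end KonigMain

section Euler
variable [DecidableEq V] [DecidableEq E]

/-- A trail of length `L` in `S`: `ℕ`-indexed, edges pairwise distinct. -/
def IsTrail (ends : E → Sym2 V) (S : Finset E) (L : ℕ) (vs : ℕ → V) (es : ℕ → E) : Prop :=
  (∀ i < L, es i ∈ S) ∧ (∀ i < L, ∀ j < L, es i = es j → i = j) ∧
    (∀ i < L, ends (es i) = s(vs i, vs (i + 1)))

lemma trail_exists {ends : E → Sym2 V} {S : Finset E} (hS : S.Nonempty) :
    ∃ vs es, IsTrail ends S 1 vs es := by
  obtain ⟨e, he⟩ := hS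
  obtain ⟨x, y, hxy⟩ := sym2_exists_eq (ends e)
  refine ⟨fun i => if i = 0 then x else y, fun _ => e, fun i _ => he, fun i hi j hj _ => by omega, ?_⟩
  intro i hi
  interval_cases i
  simpa using hxy

lemma trail_length_le {ends : E → Sym2 V} {S : Finset E} {L : ℕ} {vs : ℕ → V} {es : ℕ → E}
    (h : IsTrail ends S L vs es) : L ≤ S.card := by
  classical
  have := Finset.card_le_card_of_injOn es (fun i hi => h.1 i (Finset.mem_range.1 hi))
    (fun i hi j hj hij => h.2.1 i (Finset.mem_range.1 hi) j (Finset.mem_range.1 hj) hij)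
  simpa using this

lemma trail_reverse {ends : E → Sym2 V} {S : Finset E} {L : ℕ} {vs : ℕ → V} {es : ℕ → E}
    (h : IsTrail ends S L vs es) :
    IsTrail ends S L (fun i => vs (L - i)) (fun i => es (L - 1 - i)) := by
  obtain ⟨h1, h2, h3⟩ := h
  refine ⟨fun i hi => h1 _ (by omega), fun i hi j hj hij => ?_, fun i hi => ?_⟩
  · have := h2 _ (by omega : L - 1 - i < L) _ (by omega : L - 1 - j < L) hij
    omega
  · have hh := h3 (L - 1 - i) (by omega)
    dsimp only
    rw [hh, show L - (i + 1) = L - 1 - i by omega, show L - 1 - i + 1 = L - i by omega]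
    exact Sym2.eq_swap

lemma trail_extend {ends : E → Sym2 V} {S : Finset E} {L : ℕ} {vs : ℕ → V} {es : ℕ → E}
    (h : IsTrail ends S L vs es) {g : E} (hg : g ∈ S) (hni : ∀ i < L, es i ≠ g)
    (hmem : vs L ∈ ends g) : ∃ vs' es', IsTrail ends S (L + 1) vs' es' := by
  obtain ⟨z, hz⟩ := Sym2.mem_iff_exists.1 hmem
  obtain ⟨h1, h2, h3⟩ := h
  refine ⟨fun i => if i = L + 1 then z else vs i, fun i => if i = L then g else es i,
    fun i hi => ?_, fun i hi j hj hij => ?_, fun i hi => ?_⟩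
  · by_cases hiL : i = L
    · simpa [hiL] using hg
    · simpa [hiL] using h1 i (by omega)
  · dsimp only at hij
    by_cases hiL : i = L <;> by_cases hjL : j = L
    · omega
    · rw [if_pos hiL, if_neg hjL] at hij
      exact absurd hij.symm (hni j (by omega))
    · rw [if_neg hiL, if_pos hjL] at hij
      exact absurd hij (hni i (by omega))
    · rw [if_neg hiL, if_neg hjL] at hij
      have := h2 i (by omega) j (by omega) hij
      omega
  · dsimp only
    by_cases hiL : i = L
    · subst hiL
      rw [if_pos rfl, if_pos rfl, if_neg (by omega : ¬ i = i + 1)]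
      exact hz
    · rw [if_neg hiL, if_neg (by omega : ¬ i = L + 1), if_neg (by omega : ¬ i + 1 = L + 1)]
      exact h3 i (by omega)

lemma trail_closed_even {ends : E → Sym2 V} {S : Finset E} {L : ℕ} {vs : ℕ → V} {es : ℕ → E}
    {f : V → Bool} (hf : ∀ e : E, ∀ x y : V, ends e = s(x, y) → f x ≠ f y)
    (h : IsTrail ends S L vs es) (hcl : vs 0 = vs L) : L % 2 = 0 := by
  have key : ∀ i ≤ L, f (vs i) = if i % 2 = 0 then f (vs 0) else !(f (vs 0)) := by
    intro i
    induction i with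
    | zero => simp
    | succ i ihi =>
      intro hi
      have hne : f (vs i) ≠ f (vs (i + 1)) := hf _ _ _ (h.2.2 i (by omega))
      have hstep : f (vs (i + 1)) = !(f (vs i)) := by
        revert hne
        cases f (vs i) <;> cases f (vs (i + 1)) <;> simp
      rw [hstep, ihi (by omega)]
      by_cases hp : i % 2 = 0
      · rw [if_pos hp, if_neg (by omega)]
      · rw [if_neg hp, if_pos (by omega), Bool.not_not]
  by_contra hodd
  have := key L le_rfl
  rw [if_neg (by omega), ← hcl] at this
  exact (Bool.not_ne_self _ (by rw [← this])).elim

end Euler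

section EulerSplit
variable [DecidableEq V] [DecidableEq E]

lemma euler_split (ends : E → Sym2 V) (hloop : ∀ e : E, ¬ (ends e).IsDiag)
    (f : V → Bool) (hf : ∀ e : E, ∀ x y : V, ends e = s(x, y) → f x ≠ f y) :
    ∀ S : Finset E, ∃ C ⊆ S, ∀ w : V, 2 * degIn ends C w ≤ degIn ends S w + 1 ∧
      2 * degIn ends (S \ C) w ≤ degIn ends S w + 1 := by
  classical
  intro S
  induction S using Finset.strongInduction with
  | _ S ih =>
    rcases S.eq_empty_or_nonempty with rfl | hS
    · exact ⟨∅, Finset.Subset.refl _, fun w => by simp [degIn]⟩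
    have hbdd : ∀ n ∈ {L | ∃ vs es, IsTrail ends S L vs es}, n ≤ S.card := by
      rintro n ⟨vs, es, h⟩
      exact trail_length_le h
    have h1 : 1 ∈ {L | ∃ vs es, IsTrail ends S L vs es} := trail_exists hS
    set L := sSup {L | ∃ vs es, IsTrail ends S L vs es} with hLdef
    obtain ⟨vs, es, htr⟩ : ∃ vs es, IsTrail ends S L vs es :=
      Nat.sSup_mem ⟨1, h1⟩ ⟨S.card, hbdd⟩
    have hL1 : 1 ≤ L := le_csSup ⟨S.card, hbdd⟩ h1
    have hcompat : ∀ i < L, ends (es i) = s(vs i, vs (i + 1)) := htr.2.2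
    have hsatL : ∀ g ∈ S, vs L ∈ ends g → ∃ i < L, es i = g := by
      intro g hg hmem
      by_contra hno
      push_neg at hno
      obtain ⟨vs', es', htr'⟩ := trail_extend htr hg (fun i hi => hno i hi) hmem
      have : L + 1 ≤ L := le_csSup ⟨S.card, hbdd⟩ ⟨vs', es', htr'⟩
      omega
    have hsat0 : ∀ g ∈ S, vs 0 ∈ ends g → ∃ i < L, es i = g := by
      intro g hg hmem
      by_contra hno
      push_neg at hno
      have hmem' : vs (L - L) ∈ ends g := by rwa [Nat.sub_self]
      obtain ⟨vs', es', htr''⟩ := trail_extend (trail_reverse htr) hg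
        (fun i hi hgg => absurd hgg (hno (L - 1 - i) (by omega))) hmem'
      have : L + 1 ≤ L := le_csSup ⟨S.card, hbdd⟩ ⟨vs', es', htr''⟩
      omega
    set T := (Finset.range L).image es with hT
    have hTsub : T ⊆ S := by
      intro e he
      obtain ⟨i, hi, rfl⟩ := Finset.mem_image.1 he
      exact htr.1 i (Finset.mem_range.1 hi)
    have hTne : T.Nonempty :=
      ⟨es 0, Finset.mem_image.2 ⟨0, Finset.mem_range.2 (by omega), rfl⟩⟩
    obtain ⟨C'', hC''sub, hC''⟩ := ih (S \ T) (Finset.sdiff_ssubset hTsub hTne)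
    set Ev := fun w => (Finset.range L).filter (fun i => i % 2 = 0 ∧ w ∈ ends (es i)) with hEv
    set Od := fun w => (Finset.range L).filter (fun i => i % 2 = 1 ∧ w ∈ ends (es i)) with hOd
    set CT := ((Finset.range L).filter (fun i => i % 2 = 0)).image es with hCT
    set OT := ((Finset.range L).filter (fun i => i % 2 = 1)).image es with hOT
    have hEvmem : ∀ w i, i ∈ Ev w ↔ i < L ∧ i % 2 = 0 ∧ w ∈ ends (es i) := by
      intro w i; simp [hEv]
    have hOdmem : ∀ w i, i ∈ Od w ↔ i < L ∧ i % 2 = 1 ∧ w ∈ ends (es i) := by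
      intro w i; simp [hOd]
    have hinj : ∀ i < L, ∀ j < L, es i = es j → i = j := htr.2.1
    have hmem_cases : ∀ w, ∀ i < L, w ∈ ends (es i) → w = vs i ∨ w = vs (i + 1) := by
      intro w i hi hm
      rwa [hcompat i hi, Sym2.mem_iff] at hm
    have hnotboth : ∀ w, ∀ i < L, w = vs i → w = vs (i + 1) → False := by
      intro w i hi h1' h2'
      apply hloop (es i)
      rw [hcompat i hi, ← h1', ← h2']
      exact Sym2.mk_isDiag_iff.2 rfl
    -- degree of an image of a set of indices
    have himgdeg : ∀ (p : ℕ → Prop) [DecidablePred p] (w : V),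
        degIn ends (((Finset.range L).filter p).image es) w
          = (((Finset.range L).filter p).filter (fun i => w ∈ ends (es i))).card := by
      intro p _ w
      unfold degIn
      rw [Finset.filter_image]
      apply Finset.card_image_of_injOn
      intro i hi j hj hij
      simp only [Finset.coe_filter, Set.mem_setOf_eq, Finset.mem_filter, Finset.mem_range] at hi hj
      exact hinj i hi.1.1 j hj.1.1 hij
    have hdCT : ∀ w, degIn ends CT w = (Ev w).card := by
      intro w
      rw [hCT, himgdeg (fun i => i % 2 = 0) w]
      rw [Finset.filter_filter, hEv]
    have hdOT : ∀ w, degIn ends OT w = (Od w).card := by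
      intro w
      rw [hOT, himgdeg (fun i => i % 2 = 1) w]
      rw [Finset.filter_filter, hOd]
    have hdT : ∀ w, degIn ends T w = (Ev w).card + (Od w).card := by
      intro w
      unfold degIn
      rw [hT, Finset.filter_image]
      rw [Finset.card_image_of_injOn (by
        intro i hi j hj hij
        simp only [Finset.coe_filter, Set.mem_setOf_eq, Finset.mem_range] at hi hj
        exact hinj i hi.1 j hj.1 hij)]
      have hsplit := Finset.card_filter_add_card_filter_not
        (s := (Finset.range L).filter (fun i => w ∈ ends (es i))) (p := fun i => i % 2 = 0)
      have e1 : ((Finset.range L).filter (fun i => w ∈ ends (es i))).filter (fun i => i % 2 = 0)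
          = Ev w := by
        rw [Finset.filter_filter, hEv]
        ext i
        simp only [Finset.mem_filter, Finset.mem_range]
        tauto
      have e2 : ((Finset.range L).filter (fun i => w ∈ ends (es i))).filter (fun i => ¬ i % 2 = 0)
          = Od w := by
        rw [Finset.filter_filter, hOd]
        ext i
        simp only [Finset.mem_filter, Finset.mem_range]
        constructor
        · rintro ⟨h1, h2, h3⟩
          exact ⟨h1, by omega, h2⟩
        · rintro ⟨h1, h2, h3⟩
          exact ⟨h1, h3, by omega⟩
      rw [e1, e2] at hsplit
      omega
    have hTCO : T \ CT = OT := by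
      ext e
      simp only [hT, hCT, hOT, Finset.mem_sdiff, Finset.mem_image, Finset.mem_filter,
        Finset.mem_range]
      constructor
      · rintro ⟨⟨i, hi, rfl⟩, hnot⟩
        refine ⟨i, ⟨hi, ?_⟩, rfl⟩
        have hne : ¬ i % 2 = 0 := fun hev => hnot ⟨i, ⟨hi, hev⟩, rfl⟩
        omega
      · rintro ⟨i, ⟨hi, hodd⟩, rfl⟩
        refine ⟨⟨i, hi, rfl⟩, ?_⟩
        rintro ⟨j, ⟨hj, hev⟩, hje⟩
        have := hinj j hj i hi hje
        omega
    have hCTsub : CT ⊆ T := by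
      rw [hT, hCT]
      exact Finset.image_subset_image (Finset.filter_subset _ _)
    have hOTsub : OT ⊆ T := by
      rw [hT, hOT]
      exact Finset.image_subset_image (Finset.filter_subset _ _)
    have hend0 : ∀ w, (w = vs 0 ∨ w = vs L) → degIn ends (S \ T) w = 0 := by
      intro w hw
      unfold degIn
      rw [Finset.card_eq_zero, Finset.filter_eq_empty_iff]
      intro e he hmem
      obtain ⟨heS, heT⟩ := Finset.mem_sdiff.1 he
      rcases hw with h | h
      · obtain ⟨i, hi, rfl⟩ := hsat0 e heS (h ▸ hmem)
        exact heT (Finset.mem_image.2 ⟨i, Finset.mem_range.2 hi, rfl⟩)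
      · obtain ⟨i, hi, rfl⟩ := hsatL e heS (h ▸ hmem)
        exact heT (Finset.mem_image.2 ⟨i, Finset.mem_range.2 hi, rfl⟩)
    -- counting: even-indexed incidences vs odd-indexed incidences
    have hinjE : ∀ w, ((Ev w).filter
        (fun i => ¬ ((w = vs i ∧ i = 0) ∨ (w = vs (i + 1) ∧ i + 1 = L)))).card
          ≤ (Od w).card := by
      intro w
      apply Finset.card_le_card_of_injOn (fun i => if w = vs i then i - 1 else i + 1)
      · intro i hi
        simp only [Finset.mem_coe, Finset.mem_filter] at hi ⊢
        obtain ⟨hiEv, hexc⟩ := hi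
        rw [hEvmem] at hiEv
        obtain ⟨hiL, hiev, himem⟩ := hiEv
        rcases hmem_cases w i hiL himem with hwi | hwi
        · have hi0 : i ≠ 0 := fun h => hexc (Or.inl ⟨hwi, h⟩)
          rw [if_pos hwi, hOdmem]
          refine ⟨by omega, by omega, ?_⟩
          rw [hcompat (i - 1) (by omega), show i - 1 + 1 = i by omega, ← hwi]
          exact Sym2.mem_mk_right _ _
        · have hnvs : ¬ w = vs i := fun h => hnotboth w i hiL h hwi
          have hiL' : i + 1 ≠ L := fun h => hexc (Or.inr ⟨hwi, h⟩)
          rw [if_neg hnvs, hOdmem]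
          refine ⟨by omega, by omega, ?_⟩
          rw [hcompat (i + 1) (by omega), ← hwi]
          exact Sym2.mem_mk_left _ _
      · intro i hi j hj hij
        simp only [Finset.coe_filter, Set.mem_setOf_eq] at hi hj
        obtain ⟨hiEv, hexci⟩ := hi
        obtain ⟨hjEv, hexcj⟩ := hj
        rw [hEvmem] at hiEv hjEv
        obtain ⟨hiL, hiev, himem⟩ := hiEv
        obtain ⟨hjL, hjev, hjmem⟩ := hjEv
        dsimp only at hij
        rcases hmem_cases w i hiL himem with hwi | hwi <;>
          rcases hmem_cases w j hjL hjmem with hwj | hwj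
        · rw [if_pos hwi, if_pos hwj] at hij
          have h1 : i ≠ 0 := fun h => hexci (Or.inl ⟨hwi, h⟩)
          have h2 : j ≠ 0 := fun h => hexcj (Or.inl ⟨hwj, h⟩)
          omega
        · have hnj : ¬ w = vs j := fun h => hnotboth w j hjL h hwj
          rw [if_pos hwi, if_neg hnj] at hij
          have hi0 : i ≠ 0 := fun h => hexci (Or.inl ⟨hwi, h⟩)
          exfalso
          refine hnotboth w (j + 1) (by omega) hwj ?_
          rw [show j + 1 + 1 = i by omega]
          exact hwi
        · have hni : ¬ w = vs i := fun h => hnotboth w i hiL h hwi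
          rw [if_neg hni, if_pos hwj] at hij
          have hj0 : j ≠ 0 := fun h => hexcj (Or.inl ⟨hwj, h⟩)
          exfalso
          refine hnotboth w (i + 1) (by omega) hwi ?_
          rw [show i + 1 + 1 = j by omega]
          exact hwj
        · have hni : ¬ w = vs i := fun h => hnotboth w i hiL h hwi
          have hnj : ¬ w = vs j := fun h => hnotboth w j hjL h hwj
          rw [if_neg hni, if_neg hnj] at hij
          omega
    have hexcE : ∀ w, ((Ev w).filter
        (fun i => (w = vs i ∧ i = 0) ∨ (w = vs (i + 1) ∧ i + 1 = L))).card ≤ 1 := by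
      intro w
      rw [Finset.card_le_one]
      intro i hi j hj
      rw [Finset.mem_filter] at hi hj
      obtain ⟨hiEv, hexci⟩ := hi
      obtain ⟨hjEv, hexcj⟩ := hj
      rw [hEvmem] at hiEv hjEv
      rcases hexci with ⟨hwi, hi0⟩ | ⟨hwi, hiL'⟩ <;> rcases hexcj with ⟨hwj, hj0⟩ | ⟨hwj, hjL'⟩
      · omega
      · exfalso
        have hcl : vs 0 = vs L := by
          rw [← hi0, ← hwi, hwj, hjL']
        have heven := trail_closed_even hf htr hcl
        omega
      · exfalso
        have hcl : vs 0 = vs L := by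
          rw [← hj0, ← hwj, hwi, hiL']
        have heven := trail_closed_even hf htr hcl
        omega
      · omega
    have hinjO : ∀ w, ((Od w).filter
        (fun j => ¬ (w = vs (j + 1) ∧ j + 1 = L))).card ≤ (Ev w).card := by
      intro w
      apply Finset.card_le_card_of_injOn (fun i => if w = vs i then i - 1 else i + 1)
      · intro i hi
        simp only [Finset.mem_coe, Finset.mem_filter] at hi ⊢
        obtain ⟨hiOd, hexc⟩ := hi
        rw [hOdmem] at hiOd
        obtain ⟨hiL, hiod, himem⟩ := hiOd
        rcases hmem_cases w i hiL himem with hwi | hwi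
        · rw [if_pos hwi, hEvmem]
          refine ⟨by omega, by omega, ?_⟩
          rw [hcompat (i - 1) (by omega), show i - 1 + 1 = i by omega, ← hwi]
          exact Sym2.mem_mk_right _ _
        · have hnvs : ¬ w = vs i := fun h => hnotboth w i hiL h hwi
          have hiL' : i + 1 ≠ L := fun h => hexc ⟨hwi, h⟩
          rw [if_neg hnvs, hEvmem]
          refine ⟨by omega, by omega, ?_⟩
          rw [hcompat (i + 1) (by omega), ← hwi]
          exact Sym2.mem_mk_left _ _
      · intro i hi j hj hij
        simp only [Finset.coe_filter, Set.mem_setOf_eq] at hi hj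
        obtain ⟨hiOd, hexci⟩ := hi
        obtain ⟨hjOd, hexcj⟩ := hj
        rw [hOdmem] at hiOd hjOd
        obtain ⟨hiL, hiod, himem⟩ := hiOd
        obtain ⟨hjL, hjod, hjmem⟩ := hjOd
        dsimp only at hij
        rcases hmem_cases w i hiL himem with hwi | hwi <;>
          rcases hmem_cases w j hjL hjmem with hwj | hwj
        · rw [if_pos hwi, if_pos hwj] at hij
          omega
        · have hnj : ¬ w = vs j := fun h => hnotboth w j hjL h hwj
          rw [if_pos hwi, if_neg hnj] at hij
          exfalso
          refine hnotboth w (j + 1) (by omega) hwj ?_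
          rw [show j + 1 + 1 = i by omega]
          exact hwi
        · have hni : ¬ w = vs i := fun h => hnotboth w i hiL h hwi
          rw [if_neg hni, if_pos hwj] at hij
          exfalso
          refine hnotboth w (i + 1) (by omega) hwi ?_
          rw [show i + 1 + 1 = j by omega]
          exact hwj
        · have hni : ¬ w = vs i := fun h => hnotboth w i hiL h hwi
          have hnj : ¬ w = vs j := fun h => hnotboth w j hjL h hwj
          rw [if_neg hni, if_neg hnj] at hij
          omega
    have hexcO : ∀ w, ((Od w).filter (fun j => w = vs (j + 1) ∧ j + 1 = L)).card ≤ 1 := by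
      intro w
      rw [Finset.card_le_one]
      intro i hi j hj
      rw [Finset.mem_filter] at hi hj
      obtain ⟨-, -, hiL'⟩ := hi
      obtain ⟨-, -, hjL'⟩ := hj
      omega
    have hEvcard : ∀ w, (Ev w).card ≤ (Od w).card + 1 := by
      intro w
      have hsplit := Finset.card_filter_add_card_filter_not
        (s := Ev w) (p := fun i => (w = vs i ∧ i = 0) ∨ (w = vs (i + 1) ∧ i + 1 = L))
      have h2 := hexcE w
      have h3 := hinjE w
      omega
    have hOdcard : ∀ w, (Od w).card ≤ (Ev w).card + 1 := by
      intro w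
      have hsplit := Finset.card_filter_add_card_filter_not
        (s := Od w) (p := fun j => w = vs (j + 1) ∧ j + 1 = L)
      have h2 := hexcO w
      have h3 := hinjO w
      omega
    have hEvcard' : ∀ w, w ≠ vs 0 → w ≠ vs L → (Ev w).card ≤ (Od w).card := by
      intro w h0 hL'
      have h3 := hinjE w
      have hsplit := Finset.card_filter_add_card_filter_not
        (s := Ev w) (p := fun i => (w = vs i ∧ i = 0) ∨ (w = vs (i + 1) ∧ i + 1 = L))
      have hempty : ((Ev w).filter
          (fun i => (w = vs i ∧ i = 0) ∨ (w = vs (i + 1) ∧ i + 1 = L))).card = 0 := by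
        rw [Finset.card_eq_zero, Finset.filter_eq_empty_iff]
        intro i hi
        rintro (⟨hwi, hi0⟩ | ⟨hwi, hiL⟩)
        · exact h0 (by rw [hwi, hi0])
        · exact hL' (by rw [hwi, hiL])
      omega
    have hOdcard' : ∀ w, w ≠ vs L → (Od w).card ≤ (Ev w).card := by
      intro w hL'
      have h3 := hinjO w
      have hsplit := Finset.card_filter_add_card_filter_not
        (s := Od w) (p := fun j => w = vs (j + 1) ∧ j + 1 = L)
      have hempty : ((Od w).filter (fun j => w = vs (j + 1) ∧ j + 1 = L)).card = 0 := by
        rw [Finset.card_eq_zero, Finset.filter_eq_empty_iff]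
        intro i hi
        rintro ⟨hwi, hiL⟩
        exact hL' (by rw [hwi, hiL])
      omega
    -- assemble
    have hdisj1 : Disjoint C'' CT :=
      Disjoint.mono hC''sub hCTsub (Finset.sdiff_disjoint : Disjoint (S \ T) T)
    have hCsub : C'' ∪ CT ⊆ S :=
      Finset.union_subset (hC''sub.trans (Finset.sdiff_subset)) (hCTsub.trans hTsub)
    have hSC : S \ (C'' ∪ CT) = ((S \ T) \ C'') ∪ OT := by
      ext e
      simp only [Finset.mem_sdiff, Finset.mem_union]
      constructor
      · rintro ⟨heS, hnC⟩
        push_neg at hnC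
        by_cases heT : e ∈ T
        · right
          rw [← hTCO]
          exact Finset.mem_sdiff.2 ⟨heT, hnC.2⟩
        · left
          exact ⟨⟨heS, heT⟩, hnC.1⟩
      · rintro (⟨⟨heS, heT⟩, hnC''⟩ | heOT)
        · refine ⟨heS, ?_⟩
          rintro (h | h)
          · exact hnC'' h
          · exact heT (hCTsub h)
        · have heT : e ∈ T := hOTsub heOT
          have hnCT : e ∉ CT := fun h => (Finset.mem_sdiff.1 (hTCO ▸ heOT)).2 h
          have hnC'' : e ∉ C'' := fun h => (Finset.mem_sdiff.1 (hC''sub h)).2 heT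
          refine ⟨hTsub heT, ?_⟩
          rintro (h | h)
          · exact hnC'' h
          · exact hnCT h
    have hdisj2 : Disjoint ((S \ T) \ C'') OT :=
      Disjoint.mono (Finset.sdiff_subset) hOTsub (Finset.sdiff_disjoint : Disjoint (S \ T) T)
    refine ⟨C'' ∪ CT, hCsub, fun w => ?_⟩
    have hc1 := hC'' w
    have hdc : degIn ends (C'' ∪ CT) w = degIn ends C'' w + (Ev w).card := by
      rw [degIn_union_of_disjoint ends hdisj1 w, hdCT w]
    have hdd : degIn ends (S \ (C'' ∪ CT)) w
        = degIn ends ((S \ T) \ C'') w + (Od w).card := by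
      rw [hSC, degIn_union_of_disjoint ends hdisj2 w, hdOT w]
    have hds := degIn_sdiff_add ends hTsub w
    have hdt := hdT w
    by_cases hw : w = vs 0 ∨ w = vs L
    · have h0 : degIn ends (S \ T) w = 0 := hend0 w hw
      have h0C : degIn ends C'' w = 0 :=
        Nat.le_zero.1 (h0 ▸ degIn_mono ends hC''sub w)
      have h0D : degIn ends ((S \ T) \ C'') w = 0 :=
        Nat.le_zero.1 (h0 ▸ degIn_mono ends (Finset.sdiff_subset) w)
      have hE := hEvcard w
      have hO := hOdcard w
      constructor <;> omega
    · push_neg at hw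
      have hE := hEvcard' w hw.1 hw.2
      have hO := hOdcard' w hw.2
      constructor <;> omega

end EulerSplit


theorem stmt_9' [Fintype V] [Fintype E] [DecidableEq V] (ends : E → Sym2 V)
    (hloop : ∀ e : E, ¬ (ends e).IsDiag) (hbip : IsBipartite ends)
    (k : ℕ) (hk : 1 ≤ k) :
    (nu ends (Finset.univ : Finset E) k : ℤ) -
        nu ends (Finset.univ : Finset E) (k - 1) ≥
      (nu ends (Finset.univ : Finset E) (k + 1) : ℤ) -
        nu ends (Finset.univ : Finset E) k := by
  classical
  obtain ⟨f, hf⟩ := hbip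
  have hbdd : ∀ j : ℕ, ∀ n ∈ {n | ∃ F : Finset E, F ⊆ Finset.univ ∧
      EdgeColorable ends F j ∧ F.card = n}, n ≤ Fintype.card E := by
    rintro j n ⟨F, -, -, rfl⟩
    simpa using Finset.card_le_univ F
  have hmem0 : ∀ j : ℕ, ∃ F : Finset E, F ⊆ Finset.univ ∧ EdgeColorable ends F j ∧
      F.card = nu ends Finset.univ j := by
    intro j
    have hne : {n | ∃ F : Finset E, F ⊆ Finset.univ ∧
        EdgeColorable ends F j ∧ F.card = n}.Nonempty :=
      ⟨0, ∅, Finset.empty_subset _, ⟨fun _ => 0, by simp, by simp⟩, rfl⟩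
    exact Nat.sSup_mem hne ⟨Fintype.card E, hbdd j⟩
  have hub : ∀ j : ℕ, ∀ F : Finset E, EdgeColorable ends F j →
      F.card ≤ nu ends Finset.univ j := by
    intro j F hcol
    exact le_csSup ⟨Fintype.card E, hbdd j⟩ ⟨F, Finset.subset_univ F, hcol, rfl⟩
  obtain ⟨A, -, hAcol, hAcard⟩ := hmem0 (k - 1)
  obtain ⟨B, -, hBcol, hBcard⟩ := hmem0 (k + 1)
  have hdegA : ∀ w, degIn ends A w ≤ k - 1 := fun w => degIn_le_of_colorable hAcol w
  have hdegB : ∀ w, degIn ends B w ≤ k + 1 := fun w => degIn_le_of_colorable hBcol w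
  set I := A ∩ B with hI
  set S := (A ∪ B) \ I with hSdef
  have hIsub : I ⊆ A ∪ B := (Finset.inter_subset_left).trans Finset.subset_union_left
  obtain ⟨C', hC'sub, hsplit⟩ := euler_split ends hloop f hf S
  have hdisj1 : Disjoint I C' :=
    (Disjoint.mono_left hC'sub (Finset.sdiff_disjoint : Disjoint ((A ∪ B) \ I) I)).symm
  have hdisj2 : Disjoint I (S \ C') :=
    (Disjoint.mono_left (Finset.sdiff_subset)
      (Finset.sdiff_disjoint : Disjoint ((A ∪ B) \ I) I)).symm
  -- degree bounds for the two recombined subgraphs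
  have hdegC : ∀ w, degIn ends (I ∪ C') w ≤ k := by
    intro w
    have h1 := (hsplit w).1
    have h2 := degIn_sdiff_add ends hIsub w
    rw [← hSdef] at h2
    have h3 := degIn_union_add_degIn_inter ends A B w
    rw [← hI] at h3
    have h4 := degIn_union_of_disjoint ends hdisj1 w
    have h5 := hdegA w
    have h6 := hdegB w
    omega
  have hdegD : ∀ w, degIn ends (I ∪ (S \ C')) w ≤ k := by
    intro w
    have h1 := (hsplit w).2
    have h2 := degIn_sdiff_add ends hIsub w
    rw [← hSdef] at h2
    have h3 := degIn_union_add_degIn_inter ends A B w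
    rw [← hI] at h3
    have h4 := degIn_union_of_disjoint ends hdisj2 w
    have h5 := hdegA w
    have h6 := hdegB w
    omega
  have hColC : EdgeColorable ends (I ∪ C') k := konig ends hloop f hf k _ hdegC
  have hColD : EdgeColorable ends (I ∪ (S \ C')) k := konig ends hloop f hf k _ hdegD
  have hCle := hub k _ hColC
  have hDle := hub k _ hColD
  -- cardinality bookkeeping
  have hc1 : (I ∪ C').card = I.card + C'.card := Finset.card_union_of_disjoint hdisj1
  have hc2 : (I ∪ (S \ C')).card = I.card + (S \ C').card :=
    Finset.card_union_of_disjoint hdisj2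
  have hc3 : (S \ C').card + C'.card = S.card := Finset.card_sdiff_add_card_eq_card hC'sub
  have hc4 : S.card + I.card = (A ∪ B).card := Finset.card_sdiff_add_card_eq_card hIsub
  have hc5 : (A ∪ B).card + I.card = A.card + B.card := Finset.card_union_add_card_inter A B
  have hkey : nu ends Finset.univ (k - 1) + nu ends Finset.univ (k + 1) ≤
      nu ends Finset.univ k + nu ends Finset.univ k := by omega
  omega

/-- For a finite bipartite loopless multigraph, the successive differences
`ν_{k+1}(G) - ν_k(G)` are non-increasing: for every `k ≥ 1`,
`ν_k(G) - ν_{k-1}(G) ≥ ν_{k+1}(G) - ν_k(G)`. -/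
theorem stmt_9 [Fintype V] [Fintype E] [DecidableEq V] (ends : E → Sym2 V)
    (hloop : ∀ e : E, ¬ (ends e).IsDiag) (hbip : IsBipartite ends)
    (k : ℕ) (hk : 1 ≤ k) :
    (nu ends (Finset.univ : Finset E) k : ℤ) -
        nu ends (Finset.univ : Finset E) (k - 1) ≥
      (nu ends (Finset.univ : Finset E) (k + 1) : ℤ) -
        nu ends (Finset.univ : Finset E) k :=
  stmt_9' ends hloop hbip k hk
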